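/- For all integers u, v, w with u + v = w: (−1)^u·2^v·j(u)² + (−1)^v·2^u·j(v)² + (−1)^w·j(w)² = (−1)^w·j(u)·j(v)·j(w) + 2^(w+2), where (−1)^n and 2^n denote powers in ℚ with integer exponent n. -/

import Mathlib

/-- Three-square identity for Jacobsthal–Lucas numbers extended to all
integers. -/
theorem stmt_17 (j : ℤ → ℚ)
    (hj0 : j 0 = 2) (hj1 : j 1 = 1)
    (hj : ∀ n : ℤ, j n = j (n - 1) + 2 * j (n - 2))
    (u v w : ℤ) (huvw : u + v = w) :
    (-1 : ℚ) ^ u * (2 : ℚ) ^ v * j u ^ 2 + (-1 : ℚ) ^ v * (2 : ℚ) ^ u * j v ^ 2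
        + (-1 : ℚ) ^ w * j w ^ 2
      = (-1 : ℚ) ^ w * j u * j v * j w + (2 : ℚ) ^ (w + 2) := by
  have hrec : ∀ n : ℤ, j (n + 2) = j (n + 1) + 2 * j n := by
    intro n
    have := hj (n + 2)
    simpa [show n + 2 - 1 = n + 1 by ring, show n + 2 - 2 = n by ring] using this
  have hcf : ∀ n : ℤ, j n = (2 : ℚ) ^ n + (-1 : ℚ) ^ n := by
    have key : ∀ n : ℤ, j n = (2 : ℚ) ^ n + (-1 : ℚ) ^ n ∧
        j (n + 1) = (2 : ℚ) ^ (n + 1) + (-1 : ℚ) ^ (n + 1) := by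
      intro n
      induction n using Int.induction_on with
      | zero => constructor <;> norm_num [hj0, hj1]
      | succ k ih =>
        refine ⟨ih.2, ?_⟩
        have := hrec k
        rw [ih.1, ih.2] at this
        rw [show (k : ℤ) + 1 + 1 = k + 2 by ring, this]
        rw [zpow_add₀ (by norm_num : (2:ℚ) ≠ 0), zpow_add₀ (by norm_num : (-1:ℚ) ≠ 0),
          zpow_add₀ (by norm_num : (2:ℚ) ≠ 0), zpow_add₀ (by norm_num : (-1:ℚ) ≠ 0)]
        norm_num; ring
      | pred k ih =>
        have h1 : j (-(k:ℤ) - 1 + 1) = (2:ℚ) ^ (-(k:ℤ) - 1 + 1) + (-1:ℚ) ^ (-(k:ℤ) - 1 + 1) := by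
          simpa using ih.1
        refine ⟨?_, h1⟩
        have := hrec (-(k:ℤ) - 1)
        rw [show -(k:ℤ) - 1 + 2 = -k + 1 by ring, show -(k:ℤ) - 1 + 1 = -k by ring] at this
        rw [ih.2, ih.1] at this
        have h2 : j (-(k:ℤ) - 1) = ((2:ℚ) ^ (-(k:ℤ) + 1) + (-1:ℚ) ^ (-(k:ℤ) + 1)
            - ((2:ℚ) ^ (-(k:ℤ)) + (-1:ℚ) ^ (-(k:ℤ)))) / 2 := by
          linarith [this]
        rw [h2]
        rw [show -(k:ℤ) + 1 = (-(k:ℤ) - 1) + 2 by ring, show -(k:ℤ) = (-(k:ℤ) - 1) + 1 by ring]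
        rw [zpow_add₀ (by norm_num : (2:ℚ) ≠ 0), zpow_add₀ (by norm_num : (-1:ℚ) ≠ 0),
          zpow_add₀ (by norm_num : (2:ℚ) ≠ 0), zpow_add₀ (by norm_num : (-1:ℚ) ≠ 0)]
        norm_num; ring
    exact fun n => (key n).1
  subst huvw
  rw [hcf u, hcf v, hcf (u + v)]
  simp only [zpow_add₀ (by norm_num : (2:ℚ) ≠ 0), zpow_add₀ (by norm_num : (-1:ℚ) ≠ 0)]
  have hs : ((-1:ℚ) ^ u) ^ 2 = 1 := by
    rw [← zpow_natCast ((-1:ℚ) ^ u) 2, ← zpow_mul, mul_comm, zpow_mul]; norm_num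
  have ht : ((-1:ℚ) ^ v) ^ 2 = 1 := by
    rw [← zpow_natCast ((-1:ℚ) ^ v) 2, ← zpow_mul, mul_comm, zpow_mul]; norm_num
  rcases sq_eq_one_iff.mp hs with h | h <;> rcases sq_eq_one_iff.mp ht with h' | h' <;>
    rw [h, h'] <;> norm_num <;> ring
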